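/- Let p ∈ ℕ and let β > 0 be a real number that is not an integer. There exists a real constant c ≠ 0, depending only on p and β, such that for every h > 0 the minimization problem min ∫_0^h (t^β − g(t))² dt over real polynomials g of degree at most p admits a unique minimizer g*, and g*(0) = c · h^β; in particular g*(0) ≠ 0. -/

import Mathlib

open MeasureTheory Polynomial Set

-- B: basic integrals
lemma intB {γ : ℝ} (hγ : -1 < γ) : ∫ t in Set.Ioc (0:ℝ) 1, t ^ γ = 1/(γ+1) := by
  rw [← intervalIntegral.integral_of_le (by norm_num : (0:ℝ) ≤ 1),
    integral_rpow (Or.inl hγ)]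
  rw [Real.one_rpow, Real.zero_rpow (by linarith)]
  ring

lemma intD {β : ℝ} (hβ : 0 < β) (k : ℕ) :
    ∫ t in Set.Ioc (0:ℝ) 1, t ^ β * t ^ k = 1/(β+k+1) := by
  have : (∫ t in Set.Ioc (0:ℝ) 1, t ^ β * t ^ k)
      = ∫ t in Set.Ioc (0:ℝ) 1, t ^ (β + k) := by
    refine setIntegral_congr_fun measurableSet_Ioc (fun t ht => ?_)
    rw [Real.rpow_add ht.1, Real.rpow_natCast]
  rw [this, intB (by linarith [Nat.cast_nonneg (α := ℝ) k])]

lemma intA (k : ℕ) : ∫ t in Set.Ioc (0:ℝ) 1, t ^ k = 1/((k:ℝ)+1) := by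
  rw [← intervalIntegral.integral_of_le (by norm_num : (0:ℝ) ≤ 1), integral_pow]
  simp

lemma intC (j k : ℕ) : ∫ t in Set.Ioc (0:ℝ) 1, t ^ j * t ^ k = 1/((j:ℝ)+k+1) := by
  simp_rw [← pow_add]
  rw [intA (j+k)]
  push_cast; ring_nf

-- positivity of ∫ q² on Ioc 0 h for nonzero polynomial q
lemma poly_sq_int_pos {h : ℝ} (hh : 0 < h) {q : ℝ[X]} (hq : q ≠ 0) :
    0 < ∫ t in Set.Ioc (0:ℝ) h, (q.eval t) ^ 2 := by
  rw [setIntegral_pos_iff_support_of_nonneg_ae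
    (Filter.Eventually.of_forall fun t => sq_nonneg _)
    (((q.continuous.pow 2)).integrableOn_Ioc)]
  have hZ : (volume {x : ℝ | q.IsRoot x}) = 0 :=
    (Polynomial.finite_setOf_isRoot hq).measure_zero _
  have hsub : Set.Ioc (0:ℝ) h ⊆
      (Function.support (fun t => (q.eval t) ^ 2) ∩ Set.Ioc 0 h) ∪ {x | q.IsRoot x} := by
    intro x hx
    by_cases hqx : q.eval x = 0
    · exact Or.inr hqx
    · exact Or.inl ⟨by simp [Function.mem_support, pow_eq_zero_iff, hqx], hx⟩
  by_contra hcon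
  push_neg at hcon
  have h0 : volume (Function.support (fun t => (q.eval t) ^ 2) ∩ Set.Ioc 0 h) = 0 :=
    le_antisymm (le_of_not_gt (by simpa using hcon.not_gt)) zero_le
  have := measure_mono hsub (μ := volume)
  rw [Real.volume_Ioc] at this
  have hle := this.trans (measure_union_le _ _)
  rw [h0, hZ, add_zero] at hle
  simp only [nonpos_iff_eq_zero, ENNReal.ofReal_eq_zero] at hle
  linarith

noncomputable def Pa (n : ℕ) (a : Fin n → ℝ) : ℝ[X] :=
  ∑ j : Fin n, Polynomial.C (a j) * Polynomial.X ^ (j : ℕ)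

lemma Pa_eval (n : ℕ) (a : Fin n → ℝ) (t : ℝ) :
    (Pa n a).eval t = ∑ j : Fin n, a j * t ^ (j : ℕ) := by
  simp [Pa, Polynomial.eval_finset_sum]

lemma Pa_natDegree (p : ℕ) (a : Fin (p+1) → ℝ) : (Pa (p+1) a).natDegree ≤ p := by
  refine Polynomial.natDegree_sum_le_of_forall_le _ _ (fun j _ => ?_)
  refine (Polynomial.natDegree_C_mul_le _ _).trans ?_
  rw [Polynomial.natDegree_X_pow]
  exact Nat.lt_succ_iff.mp j.isLt

lemma Pa_coeff (n : ℕ) (a : Fin n → ℝ) (j : Fin n) : (Pa n a).coeff (j : ℕ) = a j := by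
  simp only [Pa, Polynomial.finset_sum_coeff, Polynomial.coeff_C_mul,
    Polynomial.coeff_X_pow]
  rw [Finset.sum_eq_single j]
  · simp
  · intro b _ hb
    simp only [Fin.val_eq_val]
    rw [if_neg (Ne.symm hb), mul_zero]
  · simp

lemma Pa_eval_zero (n : ℕ) (a : Fin n → ℝ) (hn : 0 < n) :
    (Pa n a).eval 0 = a ⟨0, hn⟩ := by
  rw [Pa_eval, Finset.sum_eq_single ⟨0, hn⟩]
  · simp
  · intro b _ hb
    have : (b : ℕ) ≠ 0 := fun hh => hb (by ext; simp [hh])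
    simp [zero_pow this]
  · simp

lemma int_mul_Pa {f : ℝ → ℝ} (hf : Continuous f) (p : ℕ) (a : Fin (p+1) → ℝ) :
    ∫ t in Set.Ioc (0:ℝ) 1, f t * (Pa (p+1) a).eval t
      = ∑ k : Fin (p+1), a k * ∫ t in Set.Ioc (0:ℝ) 1, f t * t ^ (k:ℕ) := by
  have heq : ∀ t : ℝ, f t * (Pa (p+1) a).eval t
      = ∑ k : Fin (p+1), a k * (f t * t ^ (k:ℕ)) := by
    intro t
    rw [Pa_eval, Finset.mul_sum]
    exact Finset.sum_congr rfl (fun k _ => by ring)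
  simp_rw [heq]
  rw [integral_finset_sum _ (fun k _ =>
    ((show Continuous (fun t : ℝ => a k * (f t * t ^ (k:ℕ))) from
      (continuous_const.mul (hf.mul (continuous_pow _)))).integrableOn_Ioc))]
  exact Finset.sum_congr rfl (fun k _ => MeasureTheory.integral_const_mul _ _)

lemma Pa_of_natDegree_le (p : ℕ) {q : ℝ[X]} (hq : q.natDegree ≤ p) :
    q = Pa (p+1) (fun j => q.coeff (j:ℕ)) := by
  ext m
  by_cases hm : m < p + 1
  · exact (Pa_coeff (p+1) (fun j => q.coeff (j:ℕ)) ⟨m, hm⟩).symm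
  · rw [Polynomial.coeff_eq_zero_of_natDegree_lt (lt_of_le_of_lt hq (by omega)),
      Polynomial.coeff_eq_zero_of_natDegree_lt
        (lt_of_le_of_lt (Pa_natDegree p _) (by omega))]

lemma a0_ne_zero (p : ℕ) (β : ℝ) (hβ : 0 < β) (hnotint : ∀ m : ℕ, β ≠ (m : ℝ))
    (a : Fin (p+1) → ℝ)
    (hsys : ∀ k : Fin (p+1),
      ∑ j : Fin (p+1), (((j:ℕ):ℝ) + (k:ℕ) + 1)⁻¹ * a j = (β + (k:ℕ) + 1)⁻¹) :
    a 0 ≠ 0 := by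
  intro ha0
  set J : Finset (Fin (p+1)) := Finset.univ.erase 0 with hJ
  have hcard : J.card = p := by
    rw [hJ, Finset.card_erase_of_mem (Finset.mem_univ _)]
    simp
  set N : Polynomial ℝ :=
    (∏ j ∈ J, (Polynomial.X + Polynomial.C ((j:ℕ):ℝ)))
      - ∑ j ∈ J, Polynomial.C (a j) *
          ((Polynomial.X + Polynomial.C β)
            * ∏ j' ∈ J.erase j, (Polynomial.X + Polynomial.C ((j':ℕ):ℝ))) with hN
  have hdeg : N.natDegree ≤ p := by
    refine (Polynomial.natDegree_sub_le _ _).trans (max_le ?_ ?_)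
    · refine (Polynomial.natDegree_prod_le _ _).trans ?_
      simp only [Polynomial.natDegree_X_add_C]
      rw [Finset.sum_const, smul_eq_mul, mul_one, hcard]
    · refine Polynomial.natDegree_sum_le_of_forall_le _ _ (fun j hj => ?_)
      refine (Polynomial.natDegree_C_mul_le _ _).trans ?_
      refine (Polynomial.natDegree_mul_le).trans ?_
      have h1 : (Polynomial.X + Polynomial.C β).natDegree = 1 :=
        Polynomial.natDegree_X_add_C _
      have h2 : (∏ j' ∈ J.erase j, (Polynomial.X + Polynomial.C ((j':ℕ):ℝ))).natDegree
          ≤ p - 1 := by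
        refine (Polynomial.natDegree_prod_le _ _).trans ?_
        simp only [Polynomial.natDegree_X_add_C]
        rw [Finset.sum_const, smul_eq_mul, mul_one, Finset.card_erase_of_mem hj, hcard]
      have hp1 : 1 ≤ p := by
        by_contra hp
        have : p = 0 := by omega
        subst this
        have : J = ∅ := Finset.card_eq_zero.mp hcard
        rw [this] at hj
        exact absurd hj (Finset.notMem_empty _)
      omega
  have heval : ∀ k : Fin (p+1), N.eval (((k:ℕ):ℝ) + 1) = 0 := by
    intro k
    set s : ℝ := ((k:ℕ):ℝ) + 1 with hs
    have hs0 : 0 < s := by positivity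
    have hsys' : ∑ j ∈ J, (s + ((j:ℕ):ℝ))⁻¹ * a j = (s + β)⁻¹ := by
      have h0 := hsys k
      rw [← Finset.sum_erase_add _ _ (Finset.mem_univ (0 : Fin (p+1)))] at h0
      simp only [ha0, mul_zero, add_zero] at h0
      rw [show (β + (k:ℕ) + 1 : ℝ) = s + β by rw [hs]; ring] at h0
      rw [← h0]
      exact Finset.sum_congr rfl (fun j _ => by rw [show ((j:ℕ):ℝ) + (k:ℕ) + 1 = s + (j:ℕ) by rw [hs]; ring])
    set P : ℝ := ∏ j ∈ J, (s + ((j:ℕ):ℝ)) with hP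
    have hterm : ∀ j ∈ J, ∏ j' ∈ J.erase j, (s + ((j':ℕ):ℝ)) = (s + ((j:ℕ):ℝ))⁻¹ * P := by
      intro j hj
      have hne : s + ((j:ℕ):ℝ) ≠ 0 := by positivity
      rw [hP, ← Finset.mul_prod_erase J _ hj]
      field_simp
    have hNeval : N.eval s = P - ∑ j ∈ J, a j * ((s + β) * ((s + ((j:ℕ):ℝ))⁻¹ * P)) := by
      rw [hN]
      simp only [Polynomial.eval_sub, Polynomial.eval_prod, Polynomial.eval_finset_sum,
        Polynomial.eval_mul, Polynomial.eval_add, Polynomial.eval_X, Polynomial.eval_C]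
      rw [← hP]
      congr 1
      exact Finset.sum_congr rfl (fun j hj => by rw [hterm j hj])
    rw [hNeval]
    have hsum : ∑ j ∈ J, a j * ((s + β) * ((s + ((j:ℕ):ℝ))⁻¹ * P))
        = (s + β) * P * ∑ j ∈ J, (s + ((j:ℕ):ℝ))⁻¹ * a j := by
      rw [Finset.mul_sum]
      exact Finset.sum_congr rfl (fun j _ => by ring)
    rw [hsum, hsys', mul_comm (s+β) P, mul_assoc, mul_inv_cancel₀ (by positivity : s + β ≠ 0),
      mul_one, sub_self]
  have hNzero : N = 0 := by
    refine Polynomial.eq_zero_of_natDegree_lt_card_of_eval_eq_zero' N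
      (Finset.image (fun k : Fin (p+1) => ((k:ℕ):ℝ) + 1) Finset.univ) ?_ ?_
    · intro i hi
      obtain ⟨k, _, rfl⟩ := Finset.mem_image.mp hi
      exact heval k
    · rw [Finset.card_image_of_injective _ ?_, Finset.card_univ, Fintype.card_fin]
      · omega
      · intro x y hxy
        simp only at hxy
        have : ((x:ℕ):ℝ) = ((y:ℕ):ℝ) := by linarith
        exact Fin.val_injective (Nat.cast_injective this)
  have hevalβ : N.eval (-β) = ∏ j ∈ J, (-β + ((j:ℕ):ℝ)) := by
    rw [hN]
    simp only [Polynomial.eval_sub, Polynomial.eval_prod, Polynomial.eval_finset_sum,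
      Polynomial.eval_mul, Polynomial.eval_add, Polynomial.eval_X, Polynomial.eval_C]
    rw [neg_add_cancel]
    simp
  have hprod : ∏ j ∈ J, (-β + ((j:ℕ):ℝ)) ≠ 0 := by
    refine Finset.prod_ne_zero_iff.mpr (fun j _ => ?_)
    intro hcontr
    exact hnotint (j : ℕ) (by linarith)
  rw [hNzero] at hevalβ
  simp only [Polynomial.eval_zero] at hevalβ
  exact hprod hevalβ.symm

lemma key_one (p : ℕ) (β : ℝ) (hβ : 0 < β) (hnotint : ∀ m : ℕ, β ≠ (m : ℝ)) :
    ∃ g : Polynomial ℝ, g.natDegree ≤ p ∧ g.eval 0 ≠ 0 ∧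
      ∀ q : Polynomial ℝ, q.natDegree ≤ p →
        ∫ t in Set.Ioc (0:ℝ) 1, (t ^ β - g.eval t) * q.eval t = 0 := by
  classical
  set n := p + 1 with hn
  set H : Matrix (Fin n) (Fin n) ℝ :=
    fun k j => ((((j:ℕ):ℝ) + ((k:ℕ):ℝ) + 1))⁻¹ with hH
  -- the matrix-vector product is an integral
  have hint : ∀ (a : Fin n → ℝ) (k : Fin n),
      H.mulVec a k = ∫ t in Set.Ioc (0:ℝ) 1, t ^ (k:ℕ) * (Pa n a).eval t := by
    intro a k
    rw [int_mul_Pa (continuous_pow _) p a]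
    rw [Matrix.mulVec, dotProduct]
    refine Finset.sum_congr rfl (fun j _ => ?_)
    rw [intC (k:ℕ) (j:ℕ)]
    rw [hH]
    rw [one_div, show ((k:ℕ):ℝ) + ((j:ℕ):ℝ) + 1 = ((j:ℕ):ℝ) + ((k:ℕ):ℝ) + 1 by ring]
    ring
  -- injectivity of the Hilbert matrix
  have hinj : Function.Injective (Matrix.mulVecLin H) := by
    rw [← LinearMap.ker_eq_bot, LinearMap.ker_eq_bot']
    intro a ha
    have ha' : H.mulVec a = 0 := ha
    have horth : ∀ k : Fin n, ∫ t in Set.Ioc (0:ℝ) 1, t ^ (k:ℕ) * (Pa n a).eval t = 0 := by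
      intro k
      rw [← hint a k, ha']
      rfl
    have hPa : Pa n a = 0 := by
      by_contra hne
      have hpos := poly_sq_int_pos one_pos hne
      have hzero : ∫ t in Set.Ioc (0:ℝ) 1, ((Pa n a).eval t) ^ 2 = 0 := by
        have h1 : ∀ t : ℝ, ((Pa n a).eval t) ^ 2 = (Pa n a).eval t * (Pa n a).eval t :=
          fun t => sq ((Pa n a).eval t)
        simp_rw [h1]
        rw [int_mul_Pa (Pa n a).continuous p a]
        refine Finset.sum_eq_zero (fun k _ => ?_)
        have h2 : (fun t => (Pa n a).eval t * t ^ (k:ℕ))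
            = fun t => t ^ (k:ℕ) * (Pa n a).eval t := by funext t; ring
        rw [h2, horth k, mul_zero]
      rw [hzero] at hpos
      exact lt_irrefl 0 hpos
    funext j
    rw [← Pa_coeff n a j, hPa]
    simp
  have hsurj : Function.Surjective (Matrix.mulVecLin H) :=
    LinearMap.surjective_of_injective hinj
  obtain ⟨a, ha⟩ := hsurj (fun k => (β + ((k:ℕ):ℝ) + 1)⁻¹)
  have ha' : ∀ k : Fin n, H.mulVec a k = (β + ((k:ℕ):ℝ) + 1)⁻¹ := by
    intro k; rw [show H.mulVec a = _ from ha]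
  refine ⟨Pa n a, Pa_natDegree p a, ?_, ?_⟩
  · -- eval 0 ≠ 0
    rw [Pa_eval_zero n a (Nat.succ_pos p)]
    exact a0_ne_zero p β hβ hnotint a (fun k => by
      rw [← ha' k, Matrix.mulVec, dotProduct])
  · -- orthogonality
    intro q hq
    have hcont : Continuous (fun t : ℝ => t ^ β - (Pa n a).eval t) :=
      (Real.continuous_rpow_const hβ.le).sub (Pa n a).continuous
    rw [Pa_of_natDegree_le p hq, int_mul_Pa hcont p _]
    refine Finset.sum_eq_zero (fun k _ => ?_)
    have hmono : ∫ t in Set.Ioc (0:ℝ) 1, (t ^ β - (Pa n a).eval t) * t ^ (k:ℕ) = 0 := by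
      have hsplit : ∀ t : ℝ, (t ^ β - (Pa n a).eval t) * t ^ (k:ℕ)
          = t ^ β * t ^ (k:ℕ) - t ^ (k:ℕ) * (Pa n a).eval t := by intro t; ring
      simp_rw [hsplit]
      rw [integral_sub
        ((show Continuous (fun t : ℝ => t ^ β * t ^ (k:ℕ)) from
          (Real.continuous_rpow_const hβ.le).mul (continuous_pow _)).integrableOn_Ioc)
        ((show Continuous (fun t : ℝ => t ^ (k:ℕ) * (Pa n a).eval t) from
          (continuous_pow _).mul (Pa n a).continuous).integrableOn_Ioc)]
      rw [intD hβ (k:ℕ), ← hint a k, ha' k]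
      rw [one_div]
      ring
    rw [hmono, mul_zero]

lemma min_of_orth (p : ℕ) {β h : ℝ} (hβ : 0 < β) (hh : 0 < h) {g : Polynomial ℝ}
    (hg : g.natDegree ≤ p)
    (orth : ∀ q : Polynomial ℝ, q.natDegree ≤ p →
      ∫ t in Set.Ioc (0:ℝ) h, (t ^ β - g.eval t) * q.eval t = 0) :
    (∀ q : Polynomial ℝ, q.natDegree ≤ p →
      ∫ t in Set.Ioc (0:ℝ) h, (t ^ β - Polynomial.eval t g) ^ 2
        ≤ ∫ t in Set.Ioc (0:ℝ) h, (t ^ β - Polynomial.eval t q) ^ 2) ∧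
    (∀ g' : Polynomial ℝ, g'.natDegree ≤ p →
      (∀ q : Polynomial ℝ, q.natDegree ≤ p →
        ∫ t in Set.Ioc (0:ℝ) h, (t ^ β - Polynomial.eval t g') ^ 2
          ≤ ∫ t in Set.Ioc (0:ℝ) h, (t ^ β - Polynomial.eval t q) ^ 2) →
      g' = g) := by
  have hcβ : Continuous fun t : ℝ => t ^ β := Real.continuous_rpow_const hβ.le
  have key : ∀ q : Polynomial ℝ, q.natDegree ≤ p →
      ∫ t in Set.Ioc (0:ℝ) h, (t ^ β - Polynomial.eval t q) ^ 2
        = (∫ t in Set.Ioc (0:ℝ) h, (t ^ β - Polynomial.eval t g) ^ 2)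
          + ∫ t in Set.Ioc (0:ℝ) h, (Polynomial.eval t g - Polynomial.eval t q) ^ 2 := by
    intro q hq
    have hdq : (g - q).natDegree ≤ p := (Polynomial.natDegree_sub_le g q).trans (max_le hg hq)
    have horth := orth (g - q) hdq
    have hpt : ∀ t : ℝ, (t ^ β - Polynomial.eval t q) ^ 2
        = (t ^ β - Polynomial.eval t g) ^ 2 + (2 * ((t ^ β - Polynomial.eval t g)
            * (g - q).eval t) + (Polynomial.eval t g - Polynomial.eval t q) ^ 2) := by
      intro t; rw [Polynomial.eval_sub]; ring
    simp_rw [hpt]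
    have hi1 : IntegrableOn (fun t : ℝ => (t ^ β - Polynomial.eval t g) ^ 2)
        (Set.Ioc 0 h) := ((hcβ.sub g.continuous).pow 2).integrableOn_Ioc
    have hi2 : IntegrableOn (fun t : ℝ => 2 * ((t ^ β - Polynomial.eval t g)
        * (g - q).eval t)) (Set.Ioc 0 h) :=
      (continuous_const.mul ((hcβ.sub g.continuous).mul (g - q).continuous)).integrableOn_Ioc
    have hi3 : IntegrableOn (fun t : ℝ => (Polynomial.eval t g - Polynomial.eval t q) ^ 2)
        (Set.Ioc 0 h) := ((g.continuous.sub q.continuous).pow 2).integrableOn_Ioc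
    have hA := integral_add hi2 hi3
    have hB := integral_add hi1 (hi2.add hi3)
    simp only [Pi.add_apply] at hB
    rw [hB, hA]
    have hmid : ∫ t in Set.Ioc (0:ℝ) h,
        2 * ((t ^ β - Polynomial.eval t g) * (g - q).eval t) = 0 := by
      rw [MeasureTheory.integral_const_mul, horth, mul_zero]
    rw [hmid, zero_add]
  constructor
  · intro q hq
    rw [key q hq]
    have : 0 ≤ ∫ t in Set.Ioc (0:ℝ) h, (Polynomial.eval t g - Polynomial.eval t q) ^ 2 :=
      setIntegral_nonneg measurableSet_Ioc (fun t _ => sq_nonneg _)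
    linarith
  · intro g' hg' hmin'
    by_contra hne
    have hsub : g - g' ≠ 0 := sub_ne_zero.mpr (fun hgg => hne hgg.symm)
    have hpos : 0 < ∫ t in Set.Ioc (0:ℝ) h, ((g - g').eval t) ^ 2 :=
      poly_sq_int_pos hh hsub
    have heq : ∀ t : ℝ, ((g - g').eval t) ^ 2
        = (Polynomial.eval t g - Polynomial.eval t g') ^ 2 := by
      intro t; rw [Polynomial.eval_sub]
    simp_rw [heq] at hpos
    have h1 := hmin' g hg
    have h2 := key g' hg'
    linarith

lemma cov {h : ℝ} (hh : 0 < h) (f : ℝ → ℝ) :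
    ∫ t in Set.Ioc (0:ℝ) h, f t = h * ∫ s in Set.Ioc (0:ℝ) 1, f (h * s) := by
  rw [← intervalIntegral.integral_of_le hh.le,
    ← intervalIntegral.integral_of_le (zero_le_one (α := ℝ))]
  have := intervalIntegral.smul_integral_comp_mul_left (f := f) (a := (0:ℝ)) (b := 1) h
  rw [mul_zero, mul_one] at this
  rw [← this, smul_eq_mul]

lemma comp_deg {p : ℕ} {q : Polynomial ℝ} (hq : q.natDegree ≤ p) (r : ℝ) :
    (q.comp (Polynomial.C r * Polynomial.X)).natDegree ≤ p := by
  refine (Polynomial.natDegree_comp_le).trans ?_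
  have h1 : (Polynomial.C r * Polynomial.X).natDegree ≤ 1 :=
    (Polynomial.natDegree_C_mul_le _ _).trans (le_of_eq Polynomial.natDegree_X)
  calc q.natDegree * (Polynomial.C r * Polynomial.X).natDegree
      ≤ q.natDegree * 1 := Nat.mul_le_mul le_rfl h1
    _ = q.natDegree := mul_one _
    _ ≤ p := hq

/-- **Projection of `t ↦ t^β` onto polynomials.** For `p ∈ ℕ` and non-integer `β > 0`
there is a constant `c ≠ 0`, depending only on `p` and `β`, such that for every `h > 0`
the `L²([0,h])`-projection problem `min ∫_0^h (t^β − g(t))² dt` over real polynomials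
`g` of degree at most `p` has a unique minimizer `g*`, and `g*(0) = c · h^β`. -/
theorem projection_of_rpow_at_zero (p : ℕ) (β : ℝ) (hβ : 0 < β)
    (hnotint : ∀ n : ℕ, β ≠ (n : ℝ)) :
    ∃ c : ℝ, c ≠ 0 ∧
      ∀ h : ℝ, 0 < h →
        ∃ g : Polynomial ℝ,
          g.natDegree ≤ p ∧
          (∀ q : Polynomial ℝ, q.natDegree ≤ p →
            ∫ t in Set.Ioc (0 : ℝ) h, (t ^ β - Polynomial.eval t g) ^ 2
              ≤ ∫ t in Set.Ioc (0 : ℝ) h, (t ^ β - Polynomial.eval t q) ^ 2) ∧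
          (∀ g' : Polynomial ℝ, g'.natDegree ≤ p →
            (∀ q : Polynomial ℝ, q.natDegree ≤ p →
              ∫ t in Set.Ioc (0 : ℝ) h, (t ^ β - Polynomial.eval t g') ^ 2
                ≤ ∫ t in Set.Ioc (0 : ℝ) h, (t ^ β - Polynomial.eval t q) ^ 2) →
            g' = g) ∧
          Polynomial.eval 0 g = c * h ^ β := by
  obtain ⟨g₁, hg₁d, hg₁0, hg₁orth⟩ := key_one p β hβ hnotint
  refine ⟨g₁.eval 0, hg₁0, ?_⟩
  intro h hh
  set g : Polynomial ℝ :=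
    Polynomial.C (h ^ β) * (g₁.comp (Polynomial.C h⁻¹ * Polynomial.X)) with hgdef
  have hgeval : ∀ t : ℝ, Polynomial.eval t g = h ^ β * g₁.eval (h⁻¹ * t) := by
    intro t
    simp [hgdef, Polynomial.eval_comp]
  have hgd : g.natDegree ≤ p :=
    (Polynomial.natDegree_C_mul_le _ _).trans (comp_deg hg₁d h⁻¹)
  have horth : ∀ q : Polynomial ℝ, q.natDegree ≤ p →
      ∫ t in Set.Ioc (0:ℝ) h, (t ^ β - Polynomial.eval t g) * Polynomial.eval t q = 0 := by
    intro q hq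
    rw [cov hh]
    have hcong : ∀ s ∈ Set.Ioc (0:ℝ) 1,
        ((h*s) ^ β - Polynomial.eval (h*s) g) * Polynomial.eval (h*s) q
        = h ^ β * ((s ^ β - g₁.eval s)
            * (q.comp (Polynomial.C h * Polynomial.X)).eval s) := by
      intro s hs
      rw [hgeval, Real.mul_rpow hh.le hs.1.le,
        show h⁻¹ * (h * s) = s by field_simp, Polynomial.eval_comp]
      simp only [Polynomial.eval_mul, Polynomial.eval_C, Polynomial.eval_X]
      ring
    rw [setIntegral_congr_fun measurableSet_Ioc hcong, MeasureTheory.integral_const_mul,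
      hg₁orth _ (comp_deg hq h), mul_zero, mul_zero]
  obtain ⟨hmin, huniq⟩ := min_of_orth p hβ hh hgd horth
  exact ⟨g, hgd, hmin, huniq, by rw [hgeval 0, mul_zero]; exact mul_comm _ _⟩
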